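/- With Γ as above, for every f in the unit ball of L_p^N: ∫_D Γ(f)(t) dt = σ_1 · S_N(γ∘β∘f), where σ_1 = ∫_D ψ and S_N g = (1/N) Σ_{i<N} g(i); moreover |S_N f − S_N(γ∘β∘f)| ≤ 2^{−m*/2}. Hence the integral of Γ(f) recovers σ_1 times the mean of f up to error σ_1 · 0 + 2^{−m*/2} in the mean, i.e., |σ_1^{−1} ∫_D Γ(f) − S_N f| ≤ 2^{−m*/2}. -/

import Mathlib

open MeasureTheory Real

noncomputable section

/-- The unit cube `D = [0,1]^d`. -/
def cube (d : ℕ) : Set (Fin d → ℝ) := Set.Icc 0 1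

/-- `n`-fold partial derivative in direction `i`. -/
def pderivIter (d : ℕ) (i : Fin d) : ℕ → ((Fin d → ℝ) → ℝ) → ((Fin d → ℝ) → ℝ)
  | 0, f => f
  | n + 1, f => fun x => fderiv ℝ (pderivIter d i n f) x (Pi.single i 1)

/-- Partial derivative `∂^α f` for a multi-index `α`. -/
def mderiv {d : ℕ} (α : Fin d → ℕ) (f : (Fin d → ℝ) → ℝ) : (Fin d → ℝ) → ℝ :=
  (List.finRange d).foldr (fun i g => pderivIter d i (α i) g) f

/-- The Sobolev seminorm `|f|_{r,p,D} = (∑_{|α| = r} ∫_D |∂^α f|^p)^{1/p}`. -/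
def sobSemi (d r : ℕ) (p : ℝ) (f : (Fin d → ℝ) → ℝ) : ℝ :=
  (∑ α : Fin d → Fin (r + 1),
      if (∑ i, (α i : ℕ)) = r then ∫ x in cube d, |mderiv (fun i => (α i : ℕ)) f x| ^ p
      else 0) ^ (1 / p)

/-- The Sobolev norm `‖f‖_{W_p^r(D)} = (∑_{|α| ≤ r} ∫_D |∂^α f|^p)^{1/p}`. -/
def sobNorm (d r : ℕ) (p : ℝ) (f : (Fin d → ℝ) → ℝ) : ℝ :=
  (∑ α : Fin d → Fin (r + 1),
      if (∑ i, (α i : ℕ)) ≤ r then ∫ x in cube d, |mderiv (fun i => (α i : ℕ)) f x| ^ p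
      else 0) ^ (1 / p)

/-- The rescaled bump `ψ_v(t) = ψ (2^k (t - s_v))` on the subcube with corner
`s_v = v / 2^k`. -/
def bump (d k : ℕ) (ψ : (Fin d → ℝ) → ℝ) (v : Fin d → Fin (2 ^ k)) :
    (Fin d → ℝ) → ℝ :=
  fun t => ψ (fun j => 2 ^ k * (t j - (v j : ℝ) / 2 ^ k))

/-- The open unit cube `(0,1)^d`. -/
def openCube (d : ℕ) : Set (Fin d → ℝ) := Set.univ.pi fun _ => Set.Ioo (0 : ℝ) 1

/-- The `m`-bit quantization map `β : ℝ → {0, …, 2^m - 1}`. -/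
def quantβ (m : ℕ) (z : ℝ) : ℕ :=
  if z < -(2 : ℝ) ^ ((m : ℝ) / 2 - 1) then 0
  else if z < (2 : ℝ) ^ ((m : ℝ) / 2 - 1) then
    (⌊(2 : ℝ) ^ ((m : ℝ) / 2) * (z + (2 : ℝ) ^ ((m : ℝ) / 2 - 1))⌋).toNat
  else 2 ^ m - 1

/-- The approximate inverse `γ(y) = 2^{-m/2} y - 2^{m/2 - 1}` of the quantization map. -/
def quantγ (m : ℕ) (y : ℕ) : ℝ :=
  (2 : ℝ) ^ (-(m : ℝ) / 2) * (y : ℝ) - (2 : ℝ) ^ ((m : ℝ) / 2 - 1)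

lemma quant_err {m : ℕ} {z : ℝ} (hz : |z| ≤ (2:ℝ) ^ ((m:ℝ)/2 - 1)) :
    |z - quantγ m (quantβ m z)| ≤ (2:ℝ) ^ (-(m:ℝ)/2) := by
  set b : ℝ := (2:ℝ) ^ ((m:ℝ)/2 - 1) with hb
  set e : ℝ := (2:ℝ) ^ ((m:ℝ)/2) with he
  set einv : ℝ := (2:ℝ) ^ (-(m:ℝ)/2) with heinv
  have h2 : (0:ℝ) < 2 := two_pos
  have hepos : 0 < e := rpow_pos_of_pos h2 _
  have heinvpos : 0 < einv := rpow_pos_of_pos h2 _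
  have hie : einv * e = 1 := by
    rw [heinv, he, ← rpow_add h2, show -(m:ℝ)/2 + (m:ℝ)/2 = 0 by ring, rpow_zero]
  have h2b : 2 * b = e := by
    have h := rpow_add h2 ((m:ℝ)/2 - 1) 1
    rw [rpow_one, show (m:ℝ)/2 - 1 + 1 = (m:ℝ)/2 from by ring] at h
    rw [hb, he, h]; ring
  obtain ⟨hz1, hz2⟩ := abs_le.mp hz
  have hnlt : ¬ z < -b := not_lt.mpr hz1
  rcases lt_or_ge z b with hlt | hge
  · have hy0 : 0 ≤ e * (z + b) := mul_nonneg hepos.le (by linarith)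
    set y := e * (z + b) with hy
    have hfl0 : (0:ℤ) ≤ ⌊y⌋ := Int.floor_nonneg.mpr hy0
    simp only [quantβ, hnlt, if_false, hlt, if_true, quantγ]
    rw [if_neg hnlt, if_pos hlt]
    have hcast : ((⌊y⌋.toNat : ℕ) : ℝ) = (⌊y⌋ : ℝ) := by
      exact_mod_cast Int.toNat_of_nonneg hfl0
    rw [hcast]
    have key : einv * y = z + b := by rw [hy, ← mul_assoc, hie, one_mul]
    have hval : z - (einv * (⌊y⌋ : ℝ) - b) = einv * (y - ⌊y⌋) := by
      rw [mul_sub, key]; ring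
    rw [hval, abs_of_nonneg (mul_nonneg heinvpos.le (by linarith [Int.floor_le y]))]
    nlinarith [Int.lt_floor_add_one y, Int.floor_le y]
  · have hzb : z = b := le_antisymm hz2 hge
    simp only [quantβ, hnlt, if_false, not_lt.mpr hge, if_false, quantγ]
    rw [if_neg hnlt, if_neg (not_lt.mpr hge)]
    have hcast : ((2 ^ m - 1 : ℕ) : ℝ) = (2:ℝ) ^ m - 1 := by
      have : (1:ℕ) ≤ 2 ^ m := Nat.one_le_two_pow
      push_cast [this]; ring
    rw [hcast]
    have hem : einv * (2:ℝ) ^ m = e := by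
      rw [heinv, he, ← rpow_natCast (2:ℝ) m, ← rpow_add h2, show -(m:ℝ)/2 + (m:ℝ) = (m:ℝ)/2 by ring]
    have : z - (einv * ((2:ℝ)^m - 1) - b) = einv := by
      rw [hzb, mul_sub, hem, mul_one]
      nlinarith [h2b]
    rw [this, abs_of_pos heinvpos]

lemma openCube_subset_cube (d : ℕ) : openCube d ⊆ cube d := by
  intro x hx
  constructor <;> intro j <;> have := hx j (Set.mem_univ j)
  · exact le_of_lt this.1
  · exact le_of_lt this.2

lemma psi_integral_eq (d : ℕ) (ψ : (Fin d → ℝ) → ℝ)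
    (hsupp : tsupport ψ ⊆ openCube d) :
    ∫ x in cube d, ψ x = ∫ x, ψ x := by
  apply setIntegral_eq_integral_of_forall_compl_eq_zero
  intro x hx
  exact image_eq_zero_of_notMem_tsupport
    (fun h => hx (openCube_subset_cube d (hsupp h)))

lemma bump_integral (d k : ℕ) (ψ : (Fin d → ℝ) → ℝ) (hψ : Continuous ψ)
    (hsupp : tsupport ψ ⊆ openCube d) (v : Fin d → Fin (2 ^ k)) :
    ∫ x in cube d, bump d k ψ v x = ((2:ℝ)^(d*k))⁻¹ * ∫ x in cube d, ψ x := by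
  set c : Fin d → ℝ := fun j => (v j : ℝ) / 2 ^ k with hc
  have hpow : (0:ℝ) < 2 ^ k := by positivity
  have hbump : ∀ t, bump d k ψ v t = ψ ((2:ℝ)^k • (t - c)) := by
    intro t
    rfl
  have hzero : ∀ t ∉ cube d, bump d k ψ v t = 0 := by
    intro t ht
    rw [hbump]
    refine image_eq_zero_of_notMem_tsupport (fun h => ht ?_)
    have h2 := hsupp h
    constructor <;> intro j <;>
      · have hj := h2 j (Set.mem_univ j)
        simp only [Pi.smul_apply, Pi.sub_apply, smul_eq_mul, Set.mem_Ioo] at hj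
        have hcj : (2:ℝ)^k * c j = (v j : ℝ) := by
          simp only [hc]; field_simp
        have hvj : ((v j : ℝ) + 1) ≤ 2 ^ k := by
          exact_mod_cast Nat.succ_le_of_lt (v j).isLt
        have hv0 : (0:ℝ) ≤ (v j : ℝ) := Nat.cast_nonneg _
        simp only [Pi.zero_apply, Pi.one_apply]
        nlinarith [hj.1, hj.2]
  have hint : ∫ x in cube d, bump d k ψ v x = ∫ x, ψ ((2:ℝ)^k • (x - c)) := by
    rw [setIntegral_eq_integral_of_forall_compl_eq_zero hzero]
    exact integral_congr_ae (Filter.Eventually.of_forall hbump)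
  have htrans : ∫ x, ψ ((2:ℝ)^k • (x - c)) = ∫ x, ψ ((2:ℝ)^k • x) :=
    integral_sub_right_eq_self (fun x => ψ ((2:ℝ)^k • x)) c
  have hscale : ∫ x, ψ ((2:ℝ)^k • x) = (((2:ℝ)^k) ^ d)⁻¹ • ∫ x, ψ x := by
    rw [Measure.integral_comp_smul_of_nonneg volume ψ ((2:ℝ)^k) (hR := hpow.le)]
    congr 2
    simp [Module.finrank_fin_fun]
  rw [hint, htrans, hscale, psi_integral_eq d ψ hsupp, smul_eq_mul, ← pow_mul,
    mul_comm k d]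

/-- with `Γ(f) = ∑ γ(β(f_v)) ψ_v`, one has
`∫_D Γ(f) = σ₁ ⬝ S_N(γ∘β∘f)`, `|S_N f - S_N(γ∘β∘f)| ≤ 2^{-m*/2}`, and hence
`|σ₁⁻¹ ∫_D Γ(f) - S_N f| ≤ 2^{-m*/2}`, for `f` in the unit ball of `L_p^N`. -/
theorem stmt17 (d k m : ℕ) (p : ℝ) (hd : 0 < d) (hp : 1 ≤ p)
    (hm : ((d * k : ℕ) : ℝ) / p ≤ (m : ℝ) / 2 - 1)
    (ψ : (Fin d → ℝ) → ℝ) (hψ : Continuous ψ)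
    (hsupp : tsupport ψ ⊆ openCube d) (hσ : 0 < ∫ x in cube d, ψ x)
    (f : (Fin d → Fin (2 ^ k)) → ℝ)
    (hf : (((2 : ℝ) ^ (d * k))⁻¹ * ∑ v, |f v| ^ p) ^ (1 / p) ≤ 1) :
    (∫ x in cube d, (∑ v, quantγ m (quantβ m (f v)) * bump d k ψ v x))
        = (∫ x in cube d, ψ x) *
            (((2 : ℝ) ^ (d * k))⁻¹ * ∑ v, quantγ m (quantβ m (f v)))
    ∧ |((2 : ℝ) ^ (d * k))⁻¹ * ∑ v, f v
        - ((2 : ℝ) ^ (d * k))⁻¹ * ∑ v, quantγ m (quantβ m (f v))|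
        ≤ (2 : ℝ) ^ (-(m : ℝ) / 2)
    ∧ |(∫ x in cube d, ψ x)⁻¹ *
          (∫ x in cube d, (∑ v, quantγ m (quantβ m (f v)) * bump d k ψ v x))
        - ((2 : ℝ) ^ (d * k))⁻¹ * ∑ v, f v|
        ≤ (2 : ℝ) ^ (-(m : ℝ) / 2) := by
  set σ₁ : ℝ := ∫ x in cube d, ψ x with hσ₁
  set g : (Fin d → Fin (2 ^ k)) → ℝ := fun v => quantγ m (quantβ m (f v)) with hg
  set N : ℝ := (2:ℝ) ^ (d * k) with hNdef
  have hN : (0:ℝ) < N := by positivity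
  have hp0 : (0:ℝ) < p := lt_of_lt_of_le one_pos hp
  -- continuity and integrability of bumps
  have hcontb : ∀ v, Continuous (bump d k ψ v) := by
    intro v
    exact hψ.comp (continuous_pi fun j =>
      (continuous_const.mul ((continuous_apply j).sub continuous_const)))
  have hcomp : IsCompact (cube d) := isCompact_Icc
  have hint : ∀ v : Fin d → Fin (2 ^ k),
      IntegrableOn (fun x => g v * bump d k ψ v x) (cube d) := fun v =>
    ((continuous_const.mul (hcontb v)).continuousOn).integrableOn_compact hcomp
  -- Part 1
  have part1 : (∫ x in cube d, (∑ v, g v * bump d k ψ v x))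
      = σ₁ * (N⁻¹ * ∑ v, g v) := by
    rw [integral_finset_sum Finset.univ (fun v _ => hint v)]
    have : ∀ v : Fin d → Fin (2 ^ k),
        ∫ x in cube d, g v * bump d k ψ v x = g v * (N⁻¹ * σ₁) := by
      intro v
      rw [MeasureTheory.integral_const_mul, bump_integral d k ψ hψ hsupp v]
    simp_rw [this]
    rw [← Finset.sum_mul]
    ring
  -- pointwise bound on f
  have hb : ∀ v, |f v| ≤ (2:ℝ) ^ ((m:ℝ)/2 - 1) := by
    intro v
    have hbase : (0:ℝ) ≤ N⁻¹ * ∑ v, |f v| ^ p := by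
      apply mul_nonneg (inv_nonneg.mpr hN.le)
      exact Finset.sum_nonneg fun v _ => rpow_nonneg (abs_nonneg _) p
    have h1 : N⁻¹ * ∑ v, |f v| ^ p ≤ 1 := by
      by_contra hcon
      push_neg at hcon
      have h1p : (0:ℝ) < 1/p := by positivity
      have := (Real.one_lt_rpow_iff_of_pos (x := N⁻¹ * ∑ v, |f v| ^ p) (y := 1/p)
        (lt_trans one_pos hcon)).mpr (Or.inl ⟨hcon, h1p⟩)
      exact absurd hf (not_le.mpr this)
    have hS : ∑ v, |f v| ^ p ≤ N := by
      rw [inv_mul_le_iff₀ hN] at h1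
      linarith
    have h2 : |f v| ^ p ≤ N :=
      le_trans (Finset.single_le_sum
        (fun w _ => rpow_nonneg (abs_nonneg (f w)) p) (Finset.mem_univ v)) hS
    have h3 : |f v| = (|f v| ^ p) ^ (1/p) := by
      rw [← Real.rpow_mul (abs_nonneg _), mul_one_div, div_self hp0.ne', Real.rpow_one]
    calc |f v| = (|f v| ^ p) ^ (1/p) := h3
      _ ≤ N ^ (1/p) := Real.rpow_le_rpow (rpow_nonneg (abs_nonneg _) p) h2 (by positivity)
      _ = (2:ℝ) ^ (((d*k : ℕ):ℝ) / p) := by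
          rw [hNdef, ← Real.rpow_natCast (2:ℝ) (d*k), ← Real.rpow_mul (by norm_num : (0:ℝ) ≤ 2),
            mul_one_div]
      _ ≤ (2:ℝ) ^ ((m:ℝ)/2 - 1) :=
          (Real.rpow_le_rpow_left_iff one_lt_two).mpr hm
  -- Part 2
  have part2 : |N⁻¹ * ∑ v, f v - N⁻¹ * ∑ v, g v| ≤ (2:ℝ) ^ (-(m:ℝ)/2) := by
    have hcard : ((Fintype.card (Fin d → Fin (2 ^ k)) : ℕ) : ℝ) = N := by
      rw [hNdef]
      simp [← pow_mul, mul_comm k d]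
    calc |N⁻¹ * ∑ v, f v - N⁻¹ * ∑ v, g v|
        = N⁻¹ * |∑ v, (f v - g v)| := by
          rw [← mul_sub, ← Finset.sum_sub_distrib, abs_mul, abs_of_nonneg (inv_nonneg.mpr hN.le)]
      _ ≤ N⁻¹ * ∑ v, |f v - g v| := by
          gcongr
          exact Finset.abs_sum_le_sum_abs _ _
      _ ≤ N⁻¹ * ∑ _v : Fin d → Fin (2 ^ k), (2:ℝ) ^ (-(m:ℝ)/2) := by
          gcongr with v _
          exact quant_err (hb v)
      _ = (2:ℝ) ^ (-(m:ℝ)/2) := by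
          rw [Finset.sum_const, Finset.card_univ, nsmul_eq_mul, hcard, ← mul_assoc,
            inv_mul_cancel₀ hN.ne', one_mul]
  refine ⟨part1, part2, ?_⟩
  rw [part1, ← mul_assoc, inv_mul_cancel₀ (ne_of_gt hσ), one_mul, abs_sub_comm]
  exact part2
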